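/- In the k-regular tree T (k ≥ 3) with a distinguished end ξ, defining h(x,y) as the height difference of vertices x, y relative to ξ, the number of vertices x at distance m+n from a fixed vertex 0 with h(0,x) = m−n equals (k−1)^n if m = 0, equals 1 if m ≥ 1 and n = 0, and equals (k−1)^{n−1}(k−2) if m ≥ 1 and n ≥ 1; in all cases this count is at most (k−1)^n. -/

import Mathlib

open Function Set SimpleGraph


/-- In the `k`-regular tree (`k ≥ 3`) with a distinguished end, encoded by a level
function `ℓ : V → ℤ` such that every vertex has exactly one neighbour (its parent) one
level up and all other neighbours one level down, the number of vertices `x` at distance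
`m + n` from a fixed vertex `o` with height difference `ℓ x - ℓ o = m - n` equals
`(k-1)^n` if `m = 0`, equals `1` if `m ≥ 1` and `n = 0`, and equals `(k-1)^(n-1)*(k-2)`
if `m, n ≥ 1`; in all cases it is at most `(k-1)^n`. -/
theorem regular_tree_level_sphere_count {V : Type*} (G : SimpleGraph V) (k : ℕ)
    (hk : 3 ≤ k) (hconn : G.Connected) (hacyclic : G.IsAcyclic)
    (hfin : ∀ v, (G.neighborSet v).Finite)
    (hreg : ∀ v, (G.neighborSet v).ncard = k)
    (ℓ : V → ℤ)
    (hparent : ∀ v, ∃! w, G.Adj v w ∧ ℓ w = ℓ v + 1)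
    (hlevel : ∀ v w, G.Adj v w → ℓ w = ℓ v + 1 ∨ ℓ w = ℓ v - 1)
    (o : V) (m n : ℕ) :
    (m = 0 →
      {x : V | G.dist o x = m + n ∧ ℓ x = ℓ o + ((m : ℤ) - (n : ℤ))}.ncard
        = (k - 1) ^ n) ∧
    (1 ≤ m → n = 0 →
      {x : V | G.dist o x = m + n ∧ ℓ x = ℓ o + ((m : ℤ) - (n : ℤ))}.ncard = 1) ∧
    (1 ≤ m → 1 ≤ n →
      {x : V | G.dist o x = m + n ∧ ℓ x = ℓ o + ((m : ℤ) - (n : ℤ))}.ncard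
        = (k - 1) ^ (n - 1) * (k - 2)) ∧
    {x : V | G.dist o x = m + n ∧ ℓ x = ℓ o + ((m : ℤ) - (n : ℤ))}.ncard
      ≤ (k - 1) ^ n := by
  classical
  -- parent function
  have hPex : ∀ v, ∃ w, G.Adj v w ∧ ℓ w = ℓ v + 1 := fun v => (hparent v).exists
  choose p hadj hlev using hPex
  have huniq : ∀ v w, G.Adj v w → ℓ w = ℓ v + 1 → w = p v :=
    fun v w h1 h2 => (hparent v).unique ⟨h1, h2⟩ ⟨hadj v, hlev v⟩
  have hcases : ∀ x y, G.Adj x y → p x = y ∨ p y = x := by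
    intro x y h
    rcases hlevel x y h with h1 | h2
    · exact Or.inl ((huniq x y h h1).symm)
    · exact Or.inr ((huniq y x h.symm (by omega)).symm)
  have hlevit : ∀ (a : ℕ) (v : V), ℓ (p^[a] v) = ℓ v + a := by
    intro a
    induction a with
    | zero => simp
    | succ a ih =>
      intro v
      rw [Function.iterate_succ_apply', hlev, ih]
      push_cast; ring
  -- children sets
  set ch : V → Set V := fun v => p ⁻¹' {v} with hch
  have hchEq : ∀ v, ch v = G.neighborSet v \ {p v} := by
    intro v
    ext c
    simp only [hch, mem_preimage, mem_singleton_iff, mem_diff, mem_neighborSet]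
    constructor
    · intro hc
      refine ⟨by rw [← hc]; exact (hadj c).symm, ?_⟩
      intro hcp
      have h1 := hlev c
      rw [hc] at h1
      have h2 := hlev v
      rw [← hcp] at h2
      omega
    · rintro ⟨h1, h2⟩
      rcases hcases v c h1 with h3 | h3
      · exact absurd h3.symm h2
      · exact h3
  have hchFin : ∀ v, (ch v).Finite := by
    intro v; rw [hchEq v]; exact (hfin v).diff
  have hchCard : ∀ v, (ch v).ncard = k - 1 := by
    intro v
    have hm : p v ∈ G.neighborSet v := hadj v
    rw [hchEq v, Set.ncard_diff_singleton_of_mem hm, hreg v]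
  -- counting preimages under p
  have hpre : ∀ (A : Set V), A.Finite →
      (p ⁻¹' A).Finite ∧ (p ⁻¹' A).ncard = A.ncard * (k - 1) := by
    intro A hA
    have key : p ⁻¹' A = ↑(hA.toFinset.biUnion (fun a => (hchFin a).toFinset)) := by
      ext x
      simp only [mem_preimage, Finset.coe_biUnion, mem_iUnion, Finset.mem_coe,
        Set.Finite.mem_toFinset, hch, mem_preimage, mem_singleton_iff]
      constructor
      · intro hx; exact ⟨p x, hx, rfl⟩
      · rintro ⟨a, ha, rfl⟩; exact ha
    rw [key]
    refine ⟨Finset.finite_toSet _, ?_⟩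
    rw [Set.ncard_coe_finset, Finset.card_biUnion]
    · have h5 : ∀ a ∈ hA.toFinset, ((hchFin a).toFinset).card = k - 1 := by
        intro a _
        rw [← Set.ncard_eq_toFinset_card _ (hchFin a)]
        exact hchCard a
      rw [Finset.sum_congr rfl h5, Finset.sum_const, smul_eq_mul,
        ← Set.ncard_eq_toFinset_card _ hA]
    · intro a _ b _ hab
      simp only [Finset.disjoint_left, Set.Finite.mem_toFinset, hch, mem_preimage,
        mem_singleton_iff]
      rintro x rfl h
      exact hab h
  have hdesc : ∀ (j : ℕ) (A : Set V), A.Finite →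
      {x | p^[j] x ∈ A}.Finite ∧ {x | p^[j] x ∈ A}.ncard = A.ncard * (k - 1) ^ j := by
    intro j
    induction j with
    | zero =>
      intro A hA
      have : {x | p^[0] x ∈ A} = A := by ext x; simp
      rw [this]; simp [hA]
    | succ j ih =>
      intro A hA
      obtain ⟨hf, hc⟩ := ih A hA
      have hEq : {x | p^[j+1] x ∈ A} = p ⁻¹' {x | p^[j] x ∈ A} := by
        ext x
        simp [Function.iterate_succ_apply]
      obtain ⟨hf2, hc2⟩ := hpre _ hf
      rw [hEq, hc2, hc, pow_succ, mul_assoc]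
      exact ⟨by rw [hEq] at *; exact hf2, rfl⟩
  -- walks give confluent pairs
  have hwalk : ∀ {u w : V} (W : G.Walk u w), ∃ a b, a + b ≤ W.length ∧ p^[a] u = p^[b] w := by
    intro u w W
    induction W with
    | nil => exact ⟨0, 0, by simp, rfl⟩
    | @cons u y w h W ih =>
      obtain ⟨a, b, hab, heq⟩ := ih
      rcases hcases u y h with h1 | h1
      · refine ⟨a + 1, b, by simp [SimpleGraph.Walk.length_cons]; omega, ?_⟩
        rw [Function.iterate_succ_apply, h1, heq]
      · refine ⟨a, b + 1, by simp [SimpleGraph.Walk.length_cons]; omega, ?_⟩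
        have h2 : p^[a] u = p^[a+1] y := by
          rw [Function.iterate_succ_apply, h1]
        rw [h2, Function.iterate_succ_apply', Function.iterate_succ_apply', heq]
  -- walks going up
  have hWup : ∀ (a : ℕ) (v : V), ∃ W : G.Walk v (p^[a] v), W.length = a := by
    intro a
    induction a with
    | zero => exact fun v => ⟨SimpleGraph.Walk.nil, rfl⟩
    | succ a ih =>
      intro v
      obtain ⟨W, hW⟩ := ih (p v)
      exact ⟨(SimpleGraph.Walk.cons (hadj v) W).copy rfl
        (Function.iterate_succ_apply p a v).symm, by simp [hW]⟩
  have hdistle : ∀ (x : V) (a b : ℕ), p^[a] o = p^[b] x → G.dist o x ≤ a + b := by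
    intro x a b h
    obtain ⟨W1, h1⟩ := hWup a o
    obtain ⟨W2, h2⟩ := hWup b x
    have hle := SimpleGraph.dist_le (W1.append ((W2.copy rfl h.symm).reverse))
    simpa [h1, h2] using hle
  have hdiff : ∀ (x : V) (a b : ℕ), p^[a] o = p^[b] x → (a : ℤ) + ℓ o = (b : ℤ) + ℓ x := by
    intro x a b h
    have := congrArg ℓ h
    rw [hlevit, hlevit] at this
    omega
  -- the characterization
  have hchar : ∀ x : V, (G.dist o x = m + n ∧ ℓ x = ℓ o + ((m : ℤ) - (n : ℤ))) ↔
      (p^[m] o = p^[n] x ∧ (m = 0 ∨ n = 0 ∨ p^[m-1] o ≠ p^[n-1] x)) := by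
    intro x
    have hne : ∃ a, ∃ b, p^[a] o = p^[b] x := by
      obtain ⟨W⟩ := hconn o x
      obtain ⟨a, b, _, h⟩ := hwalk W
      exact ⟨a, b, h⟩
    set a₀ := Nat.find hne with ha₀
    obtain ⟨b₀, hab₀⟩ : ∃ b, p^[a₀] o = p^[b] x := Nat.find_spec hne
    have hmono : ∀ t, p^[a₀ + t] o = p^[b₀ + t] x := by
      intro t
      rw [add_comm a₀ t, Function.iterate_add_apply, hab₀,
        add_comm b₀ t, Function.iterate_add_apply]
    have hge : a₀ + b₀ ≤ G.dist o x := by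
      obtain ⟨W, hWl⟩ := hconn.exists_walk_length_eq_dist o x
      obtain ⟨a, b, hab, h⟩ := hwalk W
      have h1 : a₀ ≤ a := Nat.find_min' hne ⟨b, h⟩
      have h2 := hdiff x a b h
      have h3 := hdiff x a₀ b₀ hab₀
      omega
    have hdisteq : G.dist o x = a₀ + b₀ :=
      le_antisymm (hdistle x a₀ b₀ hab₀) hge
    have h3 := hdiff x a₀ b₀ hab₀
    constructor
    · rintro ⟨hd, hl⟩
      have hm : m = a₀ ∧ n = b₀ := by omega
      obtain ⟨hm, hn⟩ := hm
      subst hm; subst hn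
      refine ⟨hab₀, ?_⟩
      by_contra hcon
      push_neg at hcon
      obtain ⟨hm1, hn1, heq⟩ := hcon
      have := Nat.find_min' hne ⟨n - 1, heq⟩
      omega
    · rintro ⟨heq, hor⟩
      have h2 := hdiff x m n heq
      have hma : a₀ ≤ m := Nat.find_min' hne ⟨n, heq⟩
      rcases Nat.eq_or_lt_of_le hma with he | hlt
      · have hn : n = b₀ := by omega
        constructor
        · omega
        · omega
      · exfalso
        have hm1 : 1 ≤ m := by omega
        have hn1 : 1 ≤ n := by omega
        have h4 : m - 1 = a₀ + (m - 1 - a₀) := by omega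
        have h5 : n - 1 = b₀ + (m - 1 - a₀) := by omega
        have h6 : p^[m-1] o = p^[n-1] x := by
          rw [h4, h5]; exact hmono _
        rcases hor with h | h | h
        · omega
        · omega
        · exact h h6
  have hSeq : {x : V | G.dist o x = m + n ∧ ℓ x = ℓ o + ((m : ℤ) - (n : ℤ))} =
      {x | p^[m] o = p^[n] x ∧ (m = 0 ∨ n = 0 ∨ p^[m-1] o ≠ p^[n-1] x)} := by
    ext x; exact hchar x
  rw [hSeq]
  -- three cases
  have case1 : m = 0 →
      {x | p^[m] o = p^[n] x ∧ (m = 0 ∨ n = 0 ∨ p^[m-1] o ≠ p^[n-1] x)}.ncard = (k-1)^n := by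
    intro hm; subst hm
    have hE : {x | p^[0] o = p^[n] x ∧ (0 = 0 ∨ n = 0 ∨ p^[0-1] o ≠ p^[n-1] x)} =
        {x | p^[n] x ∈ ({o} : Set V)} := by
      ext x; simp [eq_comm]
    rw [hE, (hdesc n {o} (Set.finite_singleton o)).2]
    simp
  have case2 : 1 ≤ m → n = 0 →
      {x | p^[m] o = p^[n] x ∧ (m = 0 ∨ n = 0 ∨ p^[m-1] o ≠ p^[n-1] x)}.ncard = 1 := by
    intro hm hn; subst hn
    have hE : {x | p^[m] o = p^[0] x ∧ (m = 0 ∨ 0 = 0 ∨ p^[m-1] o ≠ p^[0-1] x)} =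
        {p^[m] o} := by
      ext x; simp [eq_comm]
    rw [hE, Set.ncard_singleton]
  have case3 : 1 ≤ m → 1 ≤ n →
      {x | p^[m] o = p^[n] x ∧ (m = 0 ∨ n = 0 ∨ p^[m-1] o ≠ p^[n-1] x)}.ncard
        = (k-1)^(n-1) * (k-2) := by
    intro hm hn
    have hd : p (p^[m-1] o) = p^[m] o := by
      conv_rhs => rw [show m = (m-1)+1 by omega]
      rw [Function.iterate_succ_apply']
    have hnn : ∀ x : V, p^[n] x = p (p^[n-1] x) := by
      intro x
      conv_lhs => rw [show n = (n-1)+1 by omega]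
      rw [Function.iterate_succ_apply']
    have hE : {x | p^[m] o = p^[n] x ∧ (m = 0 ∨ n = 0 ∨ p^[m-1] o ≠ p^[n-1] x)} =
        {x | p^[n-1] x ∈ (ch (p^[m] o) \ {p^[m-1] o})} := by
      ext x
      simp only [mem_setOf_eq, mem_diff, mem_singleton_iff, hch, mem_preimage,
        mem_singleton_iff]
      constructor
      · rintro ⟨h1, h2⟩
        refine ⟨by rw [← hnn x]; exact h1.symm, ?_⟩
        rcases h2 with h | h | h
        · omega
        · omega
        · exact fun hc => h hc.symm
      · rintro ⟨h1, h2⟩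
        exact ⟨by rw [hnn x, h1], Or.inr (Or.inr (fun hc => h2 hc.symm))⟩
    have hfinD : (ch (p^[m] o) \ {p^[m-1] o}).Finite := (hchFin _).diff
    have hdm : p^[m-1] o ∈ ch (p^[m] o) := by
      simp only [hch, mem_preimage, mem_singleton_iff]
      exact hd
    have hcardD : (ch (p^[m] o) \ {p^[m-1] o}).ncard = k - 2 := by
      rw [Set.ncard_diff_singleton_of_mem hdm, hchCard]
      omega
    rw [hE, (hdesc (n-1) _ hfinD).2, hcardD, mul_comm]
  refine ⟨case1, case2, case3, ?_⟩
  rcases Nat.eq_zero_or_pos m with hm | hm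
  · rw [case1 hm]
  · rcases Nat.eq_zero_or_pos n with hn | hn
    · rw [case2 hm hn, hn, pow_zero]
    · rw [case3 hm hn]
      calc (k-1)^(n-1) * (k-2) ≤ (k-1)^(n-1) * (k-1) :=
            Nat.mul_le_mul_left _ (by omega)
        _ = (k-1)^n := by
            rw [← pow_succ]
            congr 1
            omega
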